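/- Let R be a commutative ring and p a prime. In the polynomial ring R[x₀, x₁, x₂, …] on countably many variables, the elements x_u^p + p·x_{u+1} (for u ≥ 0) form a regular sequence; that is, for every N ≥ 0 the element x_N^p + p·x_{N+1} is a nonzerodivisor in the quotient of R[x₀, x₁, …] by the ideal generated by x_u^p + p·x_{u+1} for 0 ≤ u < N. Moreover, the quotient ring R[x₀, x₁, …] / (x_u^p + p·x_{u+1} : u ≥ 0) is a free R-module with basis the images of the monomials ∏_u x_u^{e_u} where 0 ≤ e_u ≤ p − 1 for all u and all but finitely many e_u are zero. -/

import Mathlib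

set_option synthInstance.maxHeartbeats 1000000
set_option maxHeartbeats 1000000

open MvPolynomial Finsupp

namespace St16

variable {R : Type*} [CommRing R]

def deg (e : ℕ →₀ ℕ) : ℕ := e.sum fun _ n => n

lemma deg_add (a b : ℕ →₀ ℕ) : deg (a + b) = deg a + deg b :=
  Finsupp.sum_add_index' (fun _ => rfl) (fun _ _ _ => rfl)

lemma deg_single (u n : ℕ) : deg (Finsupp.single u n) = n :=
  Finsupp.sum_single_index rfl

lemma sub_add_single_cancel {p : ℕ} {e : ℕ →₀ ℕ} {u : ℕ} (h : p ≤ e u) :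
    (e - Finsupp.single u p) + Finsupp.single u p = e :=
  tsub_add_cancel_of_le (Finsupp.single_le_iff.2 h)

lemma deg_sub_single {p : ℕ} {e : ℕ →₀ ℕ} {u : ℕ} (h : p ≤ e u) :
    deg (e - Finsupp.single u p) + p = deg e := by
  have h2 := deg_add (e - Finsupp.single u p) (Finsupp.single u p)
  rw [sub_add_single_cancel h, deg_single] at h2
  omega

noncomputable def step (p : ℕ) (e : ℕ →₀ ℕ) (u : ℕ) : ℕ →₀ ℕ :=
  (e - Finsupp.single u p) + Finsupp.single (u + 1) 1

lemma deg_step_lt {p : ℕ} (hp2 : 2 ≤ p) {e : ℕ →₀ ℕ} {u : ℕ} (h : p ≤ e u) :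
    deg (step p e u) < deg e := by
  rw [step, deg_add, deg_single, ← deg_sub_single h]
  omega

open Classical in
noncomputable def findViol (p : ℕ) (U : Set ℕ) (e : ℕ →₀ ℕ) (h : ∃ u, u ∈ U ∧ p ≤ e u) : ℕ :=
  Nat.find h

open Classical in
lemma findViol_spec (p : ℕ) (U : Set ℕ) (e : ℕ →₀ ℕ) (h : ∃ u, u ∈ U ∧ p ≤ e u) :
    findViol p U e h ∈ U ∧ p ≤ e (findViol p U e h) := Nat.find_spec h

open Classical in
lemma findViol_le (p : ℕ) (U : Set ℕ) (e : ℕ →₀ ℕ) (h : ∃ u, u ∈ U ∧ p ≤ e u)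
    {u : ℕ} (hu : u ∈ U) (hpu : p ≤ e u) : findViol p U e h ≤ u :=
  Nat.find_le ⟨hu, hpu⟩

lemma findViol_eq (p : ℕ) (U : Set ℕ) (e : ℕ →₀ ℕ) (h : ∃ u, u ∈ U ∧ p ≤ e u)
    {v : ℕ} (hv : v ∈ U) (hpv : p ≤ e v)
    (hmin : ∀ w, w ∈ U → p ≤ e w → v ≤ w) : findViol p U e h = v :=
  le_antisymm (findViol_le p U e h hv hpv)
    (hmin _ (findViol_spec p U e h).1 (findViol_spec p U e h).2)

variable (R) in
open Classical in
noncomputable def fAux (p : ℕ) (hp2 : 2 ≤ p) (U : Set ℕ) (e : ℕ →₀ ℕ) :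
    {e : ℕ →₀ ℕ // ∀ u ∈ U, e u < p} →₀ R :=
  if h : ∃ u, u ∈ U ∧ p ≤ e u then
    (-(p : R)) • fAux p hp2 U (step p e (findViol p U e h))
  else Finsupp.single ⟨e, fun u hu => lt_of_not_ge fun hle => h ⟨u, hu, hle⟩⟩ 1
termination_by deg e
decreasing_by exact deg_step_lt hp2 (findViol_spec p U e h).2

open Classical in
lemma fAux_of_red (p : ℕ) (hp2 : 2 ≤ p) (U : Set ℕ) {e : ℕ →₀ ℕ}
    (h : ∀ u ∈ U, e u < p) :
    fAux R p hp2 U e = Finsupp.single ⟨e, h⟩ 1 := by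
  rw [fAux, dif_neg]
  push_neg
  exact fun u hu => (h u hu)

open Classical in
lemma fAux_of_ex (p : ℕ) (hp2 : 2 ≤ p) (U : Set ℕ) {e : ℕ →₀ ℕ}
    (h : ∃ u, u ∈ U ∧ p ≤ e u) :
    fAux R p hp2 U e = (-(p : R)) • fAux R p hp2 U (step p e (findViol p U e h)) := by
  rw [fAux, dif_pos h]

lemma fAux_of_min (p : ℕ) (hp2 : 2 ≤ p) (U : Set ℕ) {e : ℕ →₀ ℕ} {v : ℕ}
    (hv : v ∈ U) (hpv : p ≤ e v) (hmin : ∀ w, w ∈ U → p ≤ e w → v ≤ w) :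
    fAux R p hp2 U e = (-(p : R)) • fAux R p hp2 U (step p e v) := by
  have h : ∃ u, u ∈ U ∧ p ≤ e u := ⟨v, hv, hpv⟩
  rw [fAux_of_ex p hp2 U h, findViol_eq p U e h hv hpv hmin]

lemma key_aux (p : ℕ) (hp2 : 2 ≤ p) (U : Set ℕ) :
    ∀ n (e : ℕ →₀ ℕ), deg e = n → ∀ u ∈ U,
      fAux R p hp2 U (e + Finsupp.single u p)
        = (-(p : R)) • fAux R p hp2 U (e + Finsupp.single (u + 1) 1) := by
  intro n
  induction n using Nat.strong_induction_on with
  | _ n IH =>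
  intro e hdeg u hu
  have hepu : p ≤ (e + Finsupp.single u p) u := by simp
  have hex : ∃ w, w ∈ U ∧ p ≤ (e + Finsupp.single u p) w := ⟨u, hu, hepu⟩
  set v := findViol p U (e + Finsupp.single u p) hex with hvdef
  obtain ⟨hvU, hvp⟩ := findViol_spec p U (e + Finsupp.single u p) hex
  have hvu : v ≤ u := findViol_le p U _ hex hu hepu
  by_cases hev : p ≤ e v
  · -- v is already a violation of e
    have hle : Finsupp.single v p ≤ e := Finsupp.single_le_iff.2 hev
    set e₂ := step p e v with he2
    have A1 : step p (e + Finsupp.single u p) v = e₂ + Finsupp.single u p := by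
      rw [he2, step, step, ← tsub_add_eq_add_tsub hle]
      exact add_right_comm _ _ _
    have A2 : step p (e + Finsupp.single (u + 1) 1) v
        = e₂ + Finsupp.single (u + 1) 1 := by
      rw [he2, step, step, ← tsub_add_eq_add_tsub hle]
      exact add_right_comm _ _ _
    have hdeg2 : deg e₂ < n := by rw [← hdeg]; exact deg_step_lt hp2 hev
    have hmin' : ∀ w, w ∈ U → p ≤ (e + Finsupp.single (u + 1) (1 : ℕ)) w → v ≤ w := by
      intro w hw hpw
      rcases eq_or_ne w (u + 1) with rfl | hne
      · omega
      · rw [Finsupp.add_apply, Finsupp.single_eq_of_ne' (Ne.symm hne), add_zero] at hpw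
        exact findViol_le p U _ hex hw (le_trans hpw (by simp))
    have hpv' : p ≤ (e + Finsupp.single (u + 1) (1 : ℕ)) v := le_trans hev (by simp)
    rw [fAux_of_ex p hp2 U hex, ← hvdef, A1,
      IH (deg e₂) hdeg2 e₂ rfl u hu,
      fAux_of_min p hp2 U hvU hpv' hmin', A2]
  · -- v = u and no violation of e below u
    have hvu' : v = u := by
      by_contra hne
      rw [Finsupp.add_apply, Finsupp.single_eq_of_ne' (Ne.symm hne), add_zero] at hvp
      exact hev hvp
    rw [fAux_of_ex p hp2 U hex, ← hvdef, hvu', step, add_tsub_cancel_right]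

lemma key (p : ℕ) (hp2 : 2 ≤ p) (U : Set ℕ) (e : ℕ →₀ ℕ) {u : ℕ} (hu : u ∈ U) :
    fAux R p hp2 U (e + Finsupp.single u p)
      = (-(p : R)) • fAux R p hp2 U (e + Finsupp.single (u + 1) 1) :=
  key_aux p hp2 U (deg e) e rfl u hu


variable (R) in
noncomputable def gen (p u : ℕ) : MvPolynomial ℕ R :=
  X u ^ p + (p : MvPolynomial ℕ R) * X (u + 1)

variable (R) in
noncomputable def f (p : ℕ) (hp2 : 2 ≤ p) (U : Set ℕ) :
    MvPolynomial ℕ R →ₗ[R] ({e : ℕ →₀ ℕ // ∀ u ∈ U, e u < p} →₀ R) :=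
  (basisMonomials ℕ R).constr R (fAux R p hp2 U)

lemma f_monomial (p : ℕ) (hp2 : 2 ≤ p) (U : Set ℕ) (e : ℕ →₀ ℕ) (c : R) :
    f R p hp2 U (monomial e c) = c • fAux R p hp2 U e := by
  have h1 : (monomial e (1 : R)) = basisMonomials ℕ R e := by
    rw [coe_basisMonomials]
  have h2 : (monomial e c : MvPolynomial ℕ R) = c • monomial e 1 := by
    rw [smul_monomial, smul_eq_mul, mul_one]
  rw [h2, map_smul, h1, f, Module.Basis.constr_basis]

lemma monomial_mul_gen (p : ℕ) (e : ℕ →₀ ℕ) (c : R) (u : ℕ) :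
    monomial e c * gen R p u
      = monomial (e + Finsupp.single u p) c
        + (p : ℕ) • monomial (e + Finsupp.single (u + 1) 1) c := by
  have h1 : monomial e c * X u ^ p = monomial (e + Finsupp.single u p) c := by
    rw [X_pow_eq_monomial, monomial_mul, mul_one]
  have hX : (X (u + 1) : MvPolynomial ℕ R) = monomial (Finsupp.single (u + 1) 1) 1 := by
    rw [← pow_one (X (u + 1) : MvPolynomial ℕ R), X_pow_eq_monomial]
  have h2 : monomial e c * ((p : MvPolynomial ℕ R) * X (u + 1))
      = (p : ℕ) • monomial (e + Finsupp.single (u + 1) 1) c := by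
    rw [nsmul_eq_mul, mul_left_comm, hX, monomial_mul, mul_one]
  rw [gen, mul_add, h1, h2]

lemma f_mul_gen (p : ℕ) (hp2 : 2 ≤ p) (U : Set ℕ) (q : MvPolynomial ℕ R)
    {u : ℕ} (hu : u ∈ U) : f R p hp2 U (q * gen R p u) = 0 := by
  induction q using MvPolynomial.induction_on' with
  | add q1 q2 hq1 hq2 => rw [add_mul, map_add, hq1, hq2, add_zero]
  | monomial e c =>
    rw [monomial_mul_gen, map_add, map_nsmul, f_monomial, f_monomial,
      key p hp2 U e hu, ← Nat.cast_smul_eq_nsmul R]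
    rw [smul_smul, smul_smul, ← add_smul]
    have hz : c * -(p : R) + (p : R) * c = 0 := by ring
    rw [hz, zero_smul]

lemma f_ker (p : ℕ) (hp2 : 2 ≤ p) (U : Set ℕ) {q : MvPolynomial ℕ R}
    (hq : q ∈ Ideal.span ((gen R p) '' U)) : f R p hp2 U q = 0 := by
  have H : ∀ x ∈ Ideal.span ((gen R p) '' U), ∀ q : MvPolynomial ℕ R,
      f R p hp2 U (q * x) = 0 := by
    intro x hx
    induction hx using Submodule.span_induction with
    | mem x hx =>
      obtain ⟨u, hu, rfl⟩ := hx
      exact fun q => f_mul_gen p hp2 U q hu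
    | zero => intro q; rw [mul_zero, map_zero]
    | add x y _ _ hx hy => intro q; rw [mul_add, map_add, hx, hy, add_zero]
    | smul a x _ hx =>
      intro q
      rw [smul_eq_mul, ← mul_assoc]
      exact hx (q * a)
  simpa using H q hq 1


lemma li (p : ℕ) (hp2 : 2 ≤ p) (U : Set ℕ) :
    LinearIndependent R fun e : {e : ℕ →₀ ℕ // ∀ u ∈ U, e u < p} =>
      Ideal.Quotient.mk (Ideal.span ((gen R p) '' U)) (monomial e.1 1) := by
  rw [linearIndependent_iff]
  intro l hl
  set I := Ideal.span ((gen R p) '' U) with hI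
  set P := Finsupp.linearCombination R
    (fun e : {e : ℕ →₀ ℕ // ∀ u ∈ U, e u < p} =>
      (monomial e.1 1 : MvPolynomial ℕ R)) l with hP
  have hmk : Ideal.Quotient.mkₐ R I P = 0 := by
    rw [hP, Finsupp.linearCombination_apply, map_finsuppSum, ← hl,
      Finsupp.linearCombination_apply]
    refine Finsupp.sum_congr fun e _ => ?_
    rw [map_smul, Ideal.Quotient.mkₐ_eq_mk]
  have hPI : P ∈ I := by
    rwa [Ideal.Quotient.mkₐ_eq_mk, Ideal.Quotient.eq_zero_iff_mem] at hmk
  have hf : f R p hp2 U P = 0 := f_ker p hp2 U hPI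
  rw [hP, Finsupp.linearCombination_apply, map_finsuppSum] at hf
  have h2 : (l.sum fun e a => Finsupp.single e a) = 0 := by
    rw [← hf]
    refine (Finsupp.sum_congr fun e _ => ?_).symm
    rw [map_smul, f_monomial, one_smul, fAux_of_red p hp2 U e.2, smul_single,
      smul_eq_mul, mul_one]
  rwa [Finsupp.sum_single] at h2

lemma span_mem (p : ℕ) (hp2 : 2 ≤ p) (U : Set ℕ) :
    ∀ n (e : ℕ →₀ ℕ), deg e = n →
      Ideal.Quotient.mk (Ideal.span ((gen R p) '' U)) (monomial e 1)
        ∈ Submodule.span R (Set.range fun e : {e : ℕ →₀ ℕ // ∀ u ∈ U, e u < p} =>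
            Ideal.Quotient.mk (Ideal.span ((gen R p) '' U)) (monomial e.1 1)) := by
  intro n
  induction n using Nat.strong_induction_on with
  | _ n IH =>
  intro e hdeg
  by_cases hred : ∀ u ∈ U, e u < p
  · exact Submodule.subset_span ⟨⟨e, hred⟩, rfl⟩
  · push_neg at hred
    obtain ⟨u, hu, hpu⟩ := hred
    set d := e - Finsupp.single u p with hd
    have hde : d + Finsupp.single u p = e := sub_add_single_cancel hpu
    have hsplit : (monomial e 1 : MvPolynomial ℕ R)
        = monomial d 1 * gen R p u
          - (p : ℕ) • monomial (d + Finsupp.single (u + 1) 1) 1 := by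
      rw [monomial_mul_gen, hde, add_sub_cancel_right]
    have hgen : (Ideal.Quotient.mk (Ideal.span ((gen R p) '' U)))
        (monomial d 1 * gen R p u) = 0 := by
      rw [Ideal.Quotient.eq_zero_iff_mem]
      exact Ideal.mul_mem_left _ _ (Ideal.subset_span ⟨u, hu, rfl⟩)
    have hdeg2 : deg (d + Finsupp.single (u + 1) 1) < n := by
      have h3 := deg_sub_single hpu
      rw [← hd] at h3
      rw [deg_add, deg_single, ← hdeg]
      omega
    rw [hsplit, map_sub, hgen, zero_sub, map_nsmul, ← Nat.cast_smul_eq_nsmul R]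
    exact Submodule.neg_mem _ (Submodule.smul_mem _ _ (IH _ hdeg2 _ rfl))

lemma span_top (p : ℕ) (hp2 : 2 ≤ p) (U : Set ℕ) :
    ⊤ ≤ Submodule.span R (Set.range fun e : {e : ℕ →₀ ℕ // ∀ u ∈ U, e u < p} =>
      Ideal.Quotient.mk (Ideal.span ((gen R p) '' U)) (monomial e.1 1)) := by
  have aux : ∀ q : MvPolynomial ℕ R,
      Ideal.Quotient.mk (Ideal.span ((gen R p) '' U)) q
        ∈ Submodule.span R (Set.range fun e : {e : ℕ →₀ ℕ // ∀ u ∈ U, e u < p} =>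
            Ideal.Quotient.mk (Ideal.span ((gen R p) '' U)) (monomial e.1 1)) := by
    intro q
    induction q using MvPolynomial.induction_on' with
    | add q1 q2 hq1 hq2 => rw [map_add]; exact Submodule.add_mem _ hq1 hq2
    | monomial e c =>
      have h2 : (monomial e c : MvPolynomial ℕ R) = c • monomial e 1 := by
        rw [smul_monomial, smul_eq_mul, mul_one]
      have hsm : (Ideal.Quotient.mk (Ideal.span ((gen R p) '' U))) (c • monomial e 1)
          = c • (Ideal.Quotient.mk (Ideal.span ((gen R p) '' U))) (monomial e 1) := by
        rw [← Ideal.Quotient.mkₐ_eq_mk R, map_smul]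
      rw [h2, hsm]
      exact Submodule.smul_mem _ _ (span_mem p hp2 U _ e rfl)
  intro z _
  obtain ⟨q, rfl⟩ := Ideal.Quotient.mk_surjective z
  exact aux q

variable (R) in
noncomputable def quotB (p : ℕ) (hp2 : 2 ≤ p) (U : Set ℕ) :
    Module.Basis {e : ℕ →₀ ℕ // ∀ u ∈ U, e u < p} R
      (MvPolynomial ℕ R ⧸ Ideal.span ((gen R p) '' U)) :=
  Module.Basis.mk (li p hp2 U) (span_top p hp2 U)

lemma quotB_apply (p : ℕ) (hp2 : 2 ≤ p) (U : Set ℕ)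
    (e : {e : ℕ →₀ ℕ // ∀ u ∈ U, e u < p}) :
    quotB R p hp2 U e
      = Ideal.Quotient.mk (Ideal.span ((gen R p) '' U)) (monomial e.1 1) :=
  Module.Basis.mk_apply _ _ _


lemma nzd (p : ℕ) (hp2 : 2 ≤ p) (N : ℕ) :
    Ideal.Quotient.mk (Ideal.span ((gen R p) '' Set.Iio N)) (gen R p N) ∈
      nonZeroDivisors (MvPolynomial ℕ R ⧸ Ideal.span ((gen R p) '' Set.Iio N)) := by
  classical
  set B := quotB R p hp2 (Set.Iio N) with hB
  have redA : ∀ e : ℕ →₀ ℕ, (∀ u ∈ Set.Iio N, e u < p) →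
      ∀ u ∈ Set.Iio N, (e + Finsupp.single N p) u < p := by
    intro e he u hu
    rw [Finsupp.add_apply, Finsupp.single_eq_of_ne' (Set.mem_Iio.mp hu).ne', add_zero]
    exact he u hu
  have redB : ∀ e : ℕ →₀ ℕ, (∀ u ∈ Set.Iio N, e u < p) →
      ∀ u ∈ Set.Iio N, (e + Finsupp.single (N + 1) (1 : ℕ)) u < p := by
    intro e he u hu
    have : N + 1 ≠ u := by have := Set.mem_Iio.mp hu; omega
    rw [Finsupp.add_apply, Finsupp.single_eq_of_ne' this, add_zero]
    exact he u hu
  rw [mem_nonZeroDivisors_iff_right]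
  intro y hy
  set c := B.repr y with hc
  have hy2 : y = Finsupp.sum c fun e a => a • B e := by
    conv_lhs => rw [← B.linearCombination_repr y]
    rw [Finsupp.linearCombination_apply]
  have hmul : ∀ e : {e : ℕ →₀ ℕ // ∀ u ∈ Set.Iio N, e u < p},
      B e * Ideal.Quotient.mk (Ideal.span ((gen R p) '' Set.Iio N)) (gen R p N)
        = B ⟨e.1 + Finsupp.single N p, redA e.1 e.2⟩
          + (p : R) • B ⟨e.1 + Finsupp.single (N + 1) 1, redB e.1 e.2⟩ := by
    intro e
    rw [hB, quotB_apply, quotB_apply, quotB_apply, ← map_mul, monomial_mul_gen,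
      map_add, map_nsmul, ← Nat.cast_smul_eq_nsmul R]
  have h1 : y * Ideal.Quotient.mk (Ideal.span ((gen R p) '' Set.Iio N)) (gen R p N)
      = Finsupp.sum c fun e a => a • (B e * Ideal.Quotient.mk (Ideal.span ((gen R p) '' Set.Iio N)) (gen R p N)) := by
    conv_lhs => rw [hy2]
    rw [Finsupp.sum, Finsupp.sum, Finset.sum_mul]
    exact Finset.sum_congr rfl fun e _ => smul_mul_assoc _ _ _
  have hrepr : (Finsupp.sum c fun e a =>
      a • (Finsupp.single (⟨e.1 + Finsupp.single N p, redA e.1 e.2⟩ :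
              {e : ℕ →₀ ℕ // ∀ u ∈ Set.Iio N, e u < p}) (1 : R)
        + (p : R) • Finsupp.single (⟨e.1 + Finsupp.single (N + 1) 1, redB e.1 e.2⟩ :
              {e : ℕ →₀ ℕ // ∀ u ∈ Set.Iio N, e u < p}) (1 : R))) = 0 := by
    have h0 : B.repr (y * Ideal.Quotient.mk (Ideal.span ((gen R p) '' Set.Iio N)) (gen R p N)) = 0 := by rw [hy, map_zero]
    rw [h1, map_finsuppSum] at h0
    rw [← h0]
    refine Finsupp.sum_congr fun e _ => ?_
    rw [map_smul, hmul e, map_add, map_smul, Module.Basis.repr_self, Module.Basis.repr_self]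
  -- now derive y = 0
  by_contra hne
  have hcne : c ≠ 0 := fun h0 => hne (B.repr.map_eq_zero_iff.mp (by rw [← hc, h0]))
  obtain ⟨e₀, he₀, hmax⟩ := Finset.exists_max_image c.support (fun e => e.1 N)
      (Finsupp.support_nonempty_iff.mpr hcne)
  set i₀ : {e : ℕ →₀ ℕ // ∀ u ∈ Set.Iio N, e u < p} :=
    ⟨e₀.1 + Finsupp.single N p, redA e₀.1 e₀.2⟩ with hi₀
  have hz := DFunLike.congr_fun hrepr i₀
  rw [Finsupp.sum_apply, Finsupp.sum, Finset.sum_eq_single e₀] at hz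
  · rw [Finsupp.smul_apply, Finsupp.add_apply, Finsupp.smul_apply,
      Finsupp.single_apply, Finsupp.single_apply, if_pos rfl, if_neg, smul_zero,
      add_zero, Finsupp.coe_zero, Pi.zero_apply, smul_eq_mul, mul_one] at hz
    · exact (Finsupp.mem_support_iff.mp he₀) hz
    · -- ⟨e₀+δ(N+1)⟩ ≠ i₀
      intro hcontra
      have := congrArg (fun x => (x.1 : ℕ →₀ ℕ) N) hcontra
      simp only [hi₀, Finsupp.add_apply, Finsupp.single_apply] at this
      simp at this
      omega
  · intro b hb hbne
    rw [Finsupp.smul_apply, Finsupp.add_apply, Finsupp.smul_apply,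
      Finsupp.single_apply, Finsupp.single_apply, if_neg, if_neg, smul_zero,
      add_zero, smul_zero]
    · intro hcontra
      have := congrArg (fun x => (x.1 : ℕ →₀ ℕ) N) hcontra
      simp only [hi₀, Finsupp.add_apply, Finsupp.single_apply] at this
      simp at this
      have hle := hmax b hb
      omega
    · intro hcontra
      exact hbne (Subtype.ext (add_right_cancel (congrArg Subtype.val hcontra)))
  · intro h
    simp [Finsupp.notMem_support_iff.mp h]

end St16

open St16 in
theorem statement16 (R : Type*) [CommRing R] (p : ℕ) (hp : p.Prime) :
    (∀ N : ℕ,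
      Ideal.Quotient.mk
          (Ideal.span {g : MvPolynomial ℕ R |
            ∃ u < N, g = X u ^ p + (p : MvPolynomial ℕ R) * X (u + 1)})
          (X N ^ p + (p : MvPolynomial ℕ R) * X (N + 1)) ∈
        nonZeroDivisors
          (MvPolynomial ℕ R ⧸ Ideal.span {g : MvPolynomial ℕ R |
            ∃ u < N, g = X u ^ p + (p : MvPolynomial ℕ R) * X (u + 1)})) ∧
    ∃ b : Module.Basis {e : ℕ →₀ ℕ // ∀ u, e u < p} R
        (MvPolynomial ℕ R ⧸ Ideal.span
          (Set.range fun u => X u ^ p + (p : MvPolynomial ℕ R) * X (u + 1))),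
      ∀ e : {e : ℕ →₀ ℕ // ∀ u, e u < p},
        b e = Ideal.Quotient.mk
          (Ideal.span (Set.range fun u => X u ^ p + (p : MvPolynomial ℕ R) * X (u + 1)))
          (monomial e.1 1) := by
  have hp2 : 2 ≤ p := hp.two_le
  constructor
  · intro N
    have hset : {g : MvPolynomial ℕ R |
        ∃ u < N, g = X u ^ p + (p : MvPolynomial ℕ R) * X (u + 1)}
        = (gen R p) '' Set.Iio N := by
      ext g
      constructor
      · rintro ⟨u, hu, h⟩; exact ⟨u, hu, h.symm⟩
      · rintro ⟨u, hu, h⟩; exact ⟨u, hu, h.symm⟩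
    rw [hset]
    exact nzd p hp2 N
  · have hset2 : (Set.range fun u => X u ^ p + (p : MvPolynomial ℕ R) * X (u + 1))
        = (gen R p) '' Set.univ := by
      rw [Set.image_univ]
      rfl
    rw [hset2]
    refine ⟨(quotB R p hp2 Set.univ).reindex
      (Equiv.subtypeEquivRight (q := fun e : ℕ →₀ ℕ => ∀ u, e u < p) (by intro e; simp)),
      fun e => ?_⟩
    rw [Module.Basis.reindex_apply, quotB_apply]
    rfl
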